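/- Let n ∈ ℕ with n ≥ 1, let ρ ∈ (0,1], let t > 0, and let μ be a probability vector on {0,…,n−1}. Define the relative concentration Γ^{ρ,t}(μ) = max over intervals I of μ[I] / max{ρ·(|I|−1), t}. Then there exists an interval I satisfying both ρ·(|I|−1) ≤ t and μ[I] ≥ (1/2)·t·Γ^{ρ,t}(μ). -/

import Mathlib

open scoped BigOperators

set_option maxHeartbeats 1000000

/-- The relative concentration `Γ^{ρ,t}(μ)` of a probability vector `μ` on
`{0,…,n−1}`: the maximum over intervals `I = {a,…,b}` of
`μ[I] / max{ρ·(|I|−1), t}`. -/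
noncomputable def relConc (n : ℕ) (ρ t : ℝ) (μ : Fin n → ℝ) : ℝ :=
  sSup {r : ℝ | ∃ a b : Fin n, a ≤ b ∧
    r = (∑ s ∈ Finset.Icc a b, μ s) / max (ρ * (((b : ℕ) - (a : ℕ) : ℕ) : ℝ)) t}

/-- translation between sums over `Fin n` intervals and sums over `ℕ` intervals -/
lemma sum_Icc_fin_eq (n : ℕ) (μ : Fin n → ℝ) (a b : Fin n) :
    ∑ s ∈ Finset.Icc a b, μ s
      = ∑ i ∈ Finset.Icc (a : ℕ) (b : ℕ), (if h : i < n then μ ⟨i, h⟩ else 0) := by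
  rw [← Fin.map_valEmbedding_Icc, Finset.sum_map]
  refine Finset.sum_congr rfl fun s _ => ?_
  simp [Fin.valEmbedding]

/-- chunking a `ℕ`-interval sum into consecutive blocks of length `k` -/
lemma sum_chunks (ν : ℕ → ℝ) (α k : ℕ) : ∀ N : ℕ,
    ∑ j ∈ Finset.range N, ∑ i ∈ Finset.Ico (α + j * k) (α + (j + 1) * k), ν i
      = ∑ i ∈ Finset.Ico α (α + N * k), ν i := by
  intro N
  induction N with
  | zero => simp
  | succ N ih =>
      rw [Finset.sum_range_succ, ih,
        Finset.sum_Ico_consecutive ν (Nat.le_add_right _ _)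
          (by have : N * k ≤ (N + 1) * k := Nat.mul_le_mul_right k (Nat.le_succ N)
              omega)]


lemma Nat.lt_div_add_one_mul_self (a : ℕ) {b : ℕ} (hb : 0 < b) : a < (a / b + 1) * b := by
  rw [Nat.add_mul, one_mul]
  exact Nat.lt_div_mul_add hb

/-- For every probability vector `μ` on `{0,…,n−1}` there is an
interval `I = {a,…,b}` with `ρ·(|I|−1) ≤ t` and `μ[I] ≥ (1/2)·t·Γ^{ρ,t}(μ)`. -/
theorem relative_concentration_structural
    (n : ℕ) (hn : 1 ≤ n) (ρ t : ℝ) (hρ0 : 0 < ρ) (hρ1 : ρ ≤ 1) (ht : 0 < t)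
    (μ : Fin n → ℝ) (hμ0 : ∀ i, 0 ≤ μ i) (hμ1 : ∑ i, μ i = 1) :
    ∃ a b : Fin n, a ≤ b ∧
      ρ * (((b : ℕ) - (a : ℕ) : ℕ) : ℝ) ≤ t ∧
      (1 / 2) * t * relConc n ρ t μ ≤ ∑ s ∈ Finset.Icc a b, μ s := by
  set S : Set ℝ := {r : ℝ | ∃ a b : Fin n, a ≤ b ∧
    r = (∑ s ∈ Finset.Icc a b, μ s) / max (ρ * (((b : ℕ) - (a : ℕ) : ℕ) : ℝ)) t} with hS
  have hSfin : S.Finite := by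
    apply Set.Finite.subset (Set.finite_range
      (fun p : Fin n × Fin n =>
        (∑ s ∈ Finset.Icc p.1 p.2, μ s) / max (ρ * (((p.2 : ℕ) - (p.1 : ℕ) : ℕ) : ℝ)) t))
    rintro r ⟨a, b, _, rfl⟩
    exact ⟨(a, b), rfl⟩
  -- a positive element of S
  have hne : Nonempty (Fin n) := ⟨⟨0, hn⟩⟩
  obtain ⟨i0, -, hi0⟩ := Finset.exists_lt_of_sum_lt (s := Finset.univ)
    (f := fun _ : Fin n => (0:ℝ)) (g := μ) (by simp [hμ1])
  have hi0S : μ i0 / t ∈ S := by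
    refine ⟨i0, i0, le_refl _, ?_⟩
    simp [Nat.sub_self, max_eq_right ht.le]
  have hSne : S.Nonempty := ⟨_, hi0S⟩
  have hbdd : BddAbove S := hSfin.bddAbove
  have hΓ : relConc n ρ t μ = sSup S := rfl
  have hΓpos : 0 < relConc n ρ t μ := by
    rw [hΓ]
    exact lt_of_lt_of_le (div_pos hi0 ht) (le_csSup hbdd hi0S)
  obtain ⟨a, b, hab, hval⟩ := hSne.csSup_mem hSfin
  rw [← hΓ] at hval
  set Γ := relConc n ρ t μ with hΓdef
  have hsum_nonneg : ∀ (a' b' : Fin n), 0 ≤ ∑ s ∈ Finset.Icc a' b', μ s :=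
    fun a' b' => Finset.sum_nonneg fun s _ => hμ0 s
  by_cases hcase : ρ * (((b : ℕ) - (a : ℕ) : ℕ) : ℝ) ≤ t
  · -- easy case: the maximizing interval is already short
    refine ⟨a, b, hab, hcase, ?_⟩
    rw [max_eq_right hcase] at hval
    rw [hval]
    have heq : 1 / 2 * t * ((∑ s ∈ Finset.Icc a b, μ s) / t)
        = (∑ s ∈ Finset.Icc a b, μ s) / 2 := by
      field_simp
    rw [heq]
    linarith [hsum_nonneg a b]
  · -- hard case
    push_neg at hcase
    set α := (a : ℕ) with hα
    set β := (b : ℕ) with hβ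
    set L := β - α with hL
    have hLpos : 1 ≤ L := by
      by_contra h
      have : L = 0 := by omega
      rw [this] at hcase
      simp at hcase
      exact absurd hcase (not_lt.mpr ht.le)
    have hLR : (0:ℝ) < (L:ℝ) := by exact_mod_cast Nat.pos_of_ne_zero (by omega)
    have hmax : max (ρ * (L:ℝ)) t = ρ * (L:ℝ) := max_eq_left hcase.le
    rw [hmax] at hval
    set T := ∑ s ∈ Finset.Icc a b, μ s with hT
    have hρL : 0 < ρ * (L:ℝ) := mul_pos hρ0 hLR
    have hTval : T = Γ * (ρ * (L:ℝ)) := by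
      field_simp at hval
      linarith [hval]
    have hTpos : 0 < T := by rw [hTval]; positivity
    -- block length
    set k := Nat.floor (t / ρ) + 1 with hk
    have hkpos : 0 < k := Nat.succ_pos _
    have hkgt : t / ρ < (k:ℝ) := by
      rw [hk]; push_cast; exact Nat.lt_floor_add_one _
    have hkm : ρ * ((k - 1 : ℕ) : ℝ) ≤ t := by
      have h1 : ((k - 1 : ℕ) : ℝ) = (Nat.floor (t / ρ) : ℝ) := by rw [hk]; simp
      rw [h1]
      have h2 : (Nat.floor (t / ρ) : ℝ) ≤ t / ρ :=
        Nat.floor_le (div_nonneg ht.le hρ0.le)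
      calc ρ * (Nat.floor (t / ρ) : ℝ) ≤ ρ * (t / ρ) := by nlinarith
        _ = t := by field_simp
    set N := L / k + 1 with hN
    have hNk : L + 1 ≤ N * k := by
      have h1 := Nat.lt_div_add_one_mul_self L hkpos
      rw [hN]
      omega
    -- extended function on ℕ
    set ν : ℕ → ℝ := fun i => if h : i < n then μ ⟨i, h⟩ else 0 with hν
    set ν' : ℕ → ℝ := fun i => if i ≤ β then ν i else 0 with hν'
    have hν'nonneg : ∀ i, 0 ≤ ν' i := by
      intro i
      simp only [hν', hν]
      split <;> [skip; exact le_refl 0]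
      split <;> [exact hμ0 _; exact le_refl 0]
    have hTν : T = ∑ i ∈ Finset.Icc α β, ν' i := by
      rw [hT, sum_Icc_fin_eq]
      refine Finset.sum_congr rfl fun i hi => ?_
      have hiβ : i ≤ β := (Finset.mem_Icc.mp hi).2
      simp [hν', hν, hiβ]
    have hchunks : ∑ j ∈ Finset.range N,
        ∑ i ∈ Finset.Ico (α + j * k) (α + (j + 1) * k), ν' i = T := by
      rw [sum_chunks, hTν]
      rw [← Finset.Ico_add_one_right_eq_Icc]
      · symm
        apply Finset.sum_subset
        · apply Finset.Ico_subset_Ico_right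
          omega
        · intro i hi hni
          have h1 := Finset.mem_Ico.mp hi
          have h2 : ¬ (α ≤ i ∧ i < β + 1) := by
            intro h; exact hni (Finset.mem_Ico.mpr h)
          have hiβ : β < i := by omega
          simp [hν', Nat.not_le.mpr hiβ]
    -- pigeonhole
    have hNpos : 0 < N := Nat.succ_pos _
    have hNR : (0:ℝ) < (N:ℝ) := by exact_mod_cast hNpos
    obtain ⟨j, hjmem, hj⟩ := Finset.exists_le_of_sum_le
      (s := Finset.range N) (f := fun _ => T / N)
      (g := fun j => ∑ i ∈ Finset.Ico (α + j * k) (α + (j + 1) * k), ν' i)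
      ⟨0, Finset.mem_range.mpr hNpos⟩
      (by rw [hchunks, Finset.sum_const, Finset.card_range, nsmul_eq_mul]
          rw [mul_div_cancel₀ _ (ne_of_gt hNR)])
    have hjpos : 0 < ∑ i ∈ Finset.Ico (α + j * k) (α + (j + 1) * k), ν' i :=
      lt_of_lt_of_le (div_pos hTpos hNR) hj
    -- the found block intersects [α, β]
    have hstart : α + j * k ≤ β := by
      by_contra h
      push_neg at h
      have : ∑ i ∈ Finset.Ico (α + j * k) (α + (j + 1) * k), ν' i = 0 := by
        apply Finset.sum_eq_zero
        intro i hi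
        have := (Finset.mem_Ico.mp hi).1
        have hiβ : β < i := by omega
        simp [hν', Nat.not_le.mpr hiβ]
      rw [this] at hjpos
      exact lt_irrefl 0 hjpos
    -- the subinterval
    set a' := α + j * k with ha'
    set b' := min β (a' + k - 1) with hb'
    have hab' : a' ≤ b' := le_min hstart (by omega)
    have hb'n : b' < n := lt_of_le_of_lt (min_le_left _ _) b.isLt
    have ha'n : a' < n := lt_of_le_of_lt hab' hb'n
    refine ⟨⟨a', ha'n⟩, ⟨b', hb'n⟩, Fin.mk_le_mk.mpr hab', ?_, ?_⟩
    · -- short interval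
      have h1 : b' - a' ≤ k - 1 := by omega
      have h2 : ((b' - a' : ℕ) : ℝ) ≤ ((k - 1 : ℕ) : ℝ) := by exact_mod_cast h1
      calc ρ * ((b' - a' : ℕ) : ℝ) ≤ ρ * ((k - 1 : ℕ) : ℝ) := by nlinarith
        _ ≤ t := hkm
    · -- large mass
      have hsum_eq : ∑ s ∈ Finset.Icc (⟨a', ha'n⟩ : Fin n) ⟨b', hb'n⟩, μ s
          = ∑ i ∈ Finset.Ico (α + j * k) (α + (j + 1) * k), ν' i := by
        rw [sum_Icc_fin_eq]
        have hIco : Finset.Ico (α + j * k) (α + (j + 1) * k) = Finset.Ico a' (a' + k) := by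
          congr 1
          rw [ha']; ring
        rw [hIco]
        have hsub : Finset.Icc a' b' ⊆ Finset.Ico a' (a' + k) := by
          intro i hi
          have := Finset.mem_Icc.mp hi
          refine Finset.mem_Ico.mpr ⟨this.1, ?_⟩
          omega
        have := Finset.sum_subset hsub (f := ν') ?_
        · rw [← this]
          refine Finset.sum_congr rfl fun i hi => ?_
          have h1 := Finset.mem_Icc.mp hi
          have hiβ : i ≤ β := le_trans h1.2 (min_le_left _ _)
          simp [hν', hν, hiβ]
        · intro i hi hni
          have h1 := Finset.mem_Ico.mp hi
          have h2 : ¬ (a' ≤ i ∧ i ≤ b') := fun h => hni (Finset.mem_Icc.mpr h)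
          have hiβ : β < i := by omega
          simp [hν', Nat.not_le.mpr hiβ]
      rw [hsum_eq]
      refine le_trans ?_ (le_trans hj (le_refl _))
      -- (1/2) * t * Γ ≤ T / N
      have hNle : (N : ℝ) ≤ (L : ℝ) / (k : ℝ) + 1 := by
        have h4 : ((L / k : ℕ) : ℝ) ≤ (L : ℝ) / (k : ℝ) := Nat.cast_div_le
        have h5 : (N : ℝ) = ((L / k : ℕ) : ℝ) + 1 := by
          rw [hN, Nat.cast_add, Nat.cast_one]
        rw [h5]; linarith
      have hkR : (0:ℝ) < (k:ℝ) := by exact_mod_cast hkpos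
      have hLk : (L : ℝ) / (k : ℝ) ≤ ρ * (L:ℝ) / t := by
        rw [div_le_div_iff₀ hkR ht]
        have h2 : t / ρ < (k:ℝ) := hkgt
        have h3 : t < ρ * (k:ℝ) := by
          rw [div_lt_iff₀ hρ0] at h2; linarith
        have h6 := mul_le_mul_of_nonneg_left h3.le hLR.le
        linarith [h6]
      have hone : 1 < ρ * (L:ℝ) / t := by
        rw [lt_div_iff₀ ht]; linarith
      have hN2 : t * (N:ℝ) < 2 * (ρ * (L:ℝ)) := by
        have : (N:ℝ) < 2 * (ρ * (L:ℝ)) / t := by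
          calc (N:ℝ) ≤ (L : ℝ) / (k : ℝ) + 1 := hNle
            _ ≤ ρ * (L:ℝ) / t + 1 := by linarith
            _ < ρ * (L:ℝ) / t + ρ * (L:ℝ) / t := by linarith
            _ = 2 * (ρ * (L:ℝ)) / t := by ring
        rw [lt_div_iff₀ ht] at this; linarith
      rw [hTval]
      rw [le_div_iff₀ hNR]
      have hΓ0 : 0 < Γ := hΓpos
      nlinarith
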